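/- Let α, β, γ be finite multisets. Every bimultijection from α ⊔ β to γ factors uniquely as h ∘ (f ⊔ g), where f : α → α′ and g : β → β′ are bimultijection data on each component and h : α′ ⊔ β′ → γ is a multi-shuffle (the induced multijection from a disjoint union onto the sum multiset γ = α′ + β′). -/

import Mathlib

/-- `G` is (the matrix of multiplicities of) a bimultijection from `S` to `T`:
a submultiset of `S × T` both of whose projections are multijections, i.e. whose
marginals are `S` and `T`. -/
def IsBimultijection {ι κ : Type*} (G : (ι × κ) →₀ ℕ) (S : ι →₀ ℕ) (T : κ →₀ ℕ) : Prop :=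
  (∀ x : ι, S x = ∑ᶠ y : κ, G (x, y)) ∧ (∀ y : κ, T y = ∑ᶠ x : ι, G (x, y))

private lemma finsum_sum_split {ι κ M : Type*} [AddCommMonoid M] (f : ι ⊕ κ → M)
    (s : Finset (ι ⊕ κ)) (hs : Function.support f ⊆ s) :
    ∑ᶠ x, f x = (∑ᶠ x, f (Sum.inl x)) + ∑ᶠ x, f (Sum.inr x) := by
  rw [finsum_eq_sum_of_support_subset f hs,
    ← Finset.toLeft_disjSum_toRight (u := s), Finset.sum_disjSum]
  congr 1
  · exact (finsum_eq_sum_of_support_subset _ (by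
      intro x hx
      simp only [Function.mem_support] at hx
      simpa using hs (by simpa using hx : Sum.inl x ∈ Function.support f))).symm
  · exact (finsum_eq_sum_of_support_subset _ (by
      intro x hx
      simp only [Function.mem_support] at hx
      simpa using hs (by simpa using hx : Sum.inr x ∈ Function.support f))).symm

/-- Every bimultijection `G` from a disjoint union `α ⊔ β` to `γ` factors uniquely
as `h ∘ (f ⊔ g)` where `f : α → α′` and `g : β → β′` are bimultijections and
`h : α′ ⊔ β′ → γ` is the multi-shuffle associated with a decomposition
`α′ + β′ = γ`. -/
theorem bimultijection_factor_multishuffle {ι κ μ : Type*}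
    (α : ι →₀ ℕ) (β : κ →₀ ℕ) (γ : μ →₀ ℕ) (G : ((ι ⊕ κ) × μ) →₀ ℕ)
    (hG : IsBimultijection G (Finsupp.sumElim α β) γ) :
    ∃! q : ((μ →₀ ℕ) × (μ →₀ ℕ)) × (((ι × μ) →₀ ℕ) × ((κ × μ) →₀ ℕ)),
      q.1.1 + q.1.2 = γ ∧
      IsBimultijection q.2.1 α q.1.1 ∧
      IsBimultijection q.2.2 β q.1.2 ∧
      (∀ (x : ι) (y : μ), G (Sum.inl x, y) = q.2.1 (x, y)) ∧
      (∀ (x : κ) (y : μ), G (Sum.inr x, y) = q.2.2 (x, y)) := by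
  classical
  -- the restrictions of `G` to the two components
  set F₁ : (ι × μ) →₀ ℕ :=
    Finsupp.comapDomain (Prod.map Sum.inl id) G
      ((Sum.inl_injective.prodMap Function.injective_id).injOn) with hF₁
  set F₂ : (κ × μ) →₀ ℕ :=
    Finsupp.comapDomain (Prod.map Sum.inr id) G
      ((Sum.inr_injective.prodMap Function.injective_id).injOn) with hF₂
  have hF₁app : ∀ x y, F₁ (x, y) = G (Sum.inl x, y) := fun x y => rfl
  have hF₂app : ∀ x y, F₂ (x, y) = G (Sum.inr x, y) := fun x y => rfl
  -- the marginals
  set α' : μ →₀ ℕ :=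
    Finsupp.onFinset (G.support.image Prod.snd) (fun y => ∑ᶠ x : ι, G (Sum.inl x, y))
      (by
        intro y hy
        by_contra hmem
        apply hy
        apply finsum_eq_zero_of_forall_eq_zero
        intro x
        by_contra hx
        exact hmem (Finset.mem_image.2 ⟨(Sum.inl x, y), Finsupp.mem_support_iff.2 hx, rfl⟩))
      with hα'
  set β' : μ →₀ ℕ :=
    Finsupp.onFinset (G.support.image Prod.snd) (fun y => ∑ᶠ x : κ, G (Sum.inr x, y))
      (by
        intro y hy
        by_contra hmem
        apply hy
        apply finsum_eq_zero_of_forall_eq_zero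
        intro x
        by_contra hx
        exact hmem (Finset.mem_image.2 ⟨(Sum.inr x, y), Finsupp.mem_support_iff.2 hx, rfl⟩))
      with hβ'
  have hα'app : ∀ y, α' y = ∑ᶠ x : ι, G (Sum.inl x, y) := fun y => rfl
  have hβ'app : ∀ y, β' y = ∑ᶠ x : κ, G (Sum.inr x, y) := fun y => rfl
  refine ⟨((α', β'), (F₁, F₂)), ⟨?_, ⟨?_, ?_⟩, ⟨?_, ?_⟩, fun x y => (hF₁app x y).symm,
    fun x y => (hF₂app x y).symm⟩, ?_⟩
  · -- α' + β' = γ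
    ext y
    have hsplit : ∑ᶠ x : ι ⊕ κ, G (x, y)
        = (∑ᶠ x : ι, G (Sum.inl x, y)) + ∑ᶠ x : κ, G (Sum.inr x, y) := by
      apply finsum_sum_split (fun x => G (x, y)) (G.support.image Prod.fst)
      intro x hx
      simp only [Function.mem_support] at hx
      exact Finset.mem_image.2 ⟨(x, y), Finsupp.mem_support_iff.2 hx, rfl⟩
    simp only [Finsupp.add_apply, hα'app, hβ'app, hG.2 y, hsplit]
  · intro x
    have := hG.1 (Sum.inl x)
    simpa [Finsupp.sumElim_apply, hF₁app] using this
  · exact fun y => hα'app y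
  · intro x
    have := hG.1 (Sum.inr x)
    simpa [Finsupp.sumElim_apply, hF₂app] using this
  · exact fun y => hβ'app y
  · -- uniqueness
    rintro ⟨⟨a, b⟩, ⟨f, g⟩⟩ ⟨hsum, ⟨hf1, hf2⟩, ⟨hg1, hg2⟩, hfeq, hgeq⟩
    have hfF : f = F₁ := by
      ext p
      obtain ⟨x, y⟩ := p
      rw [hF₁app, ← hfeq]
    have hgF : g = F₂ := by
      ext p
      obtain ⟨x, y⟩ := p
      rw [hF₂app, ← hgeq]
    have ha : a = α' := by
      ext y
      rw [hf2 y, hα'app]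
      exact finsum_congr fun x => (hfeq x y).symm
    have hb : b = β' := by
      ext y
      rw [hg2 y, hβ'app]
      exact finsum_congr fun x => (hgeq x y).symm
    simp [ha, hb, hfF, hgF]
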